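/- Let A be a differential ring and b_1, …, b_n ∈ A such that the smallest radical differential ideal {b_1, …, b_n} equals A. Then the open sets X_{b_1}, …, X_{b_n} cover X = Spec^Δ A; conversely, if X_{b_1}, …, X_{b_n} cover X and A is a Keigher ring, then {b_1, …, b_n} = A. -/
import Mathlib


/-- An ideal is a differential ideal w.r.t. a family of derivation maps `d`. -/
def IsDiffIdeal {A : Type*} [CommRing A] {k : ℕ} (d : Fin k → A → A) (I : Ideal A) : Prop :=
  ∀ i : Fin k, ∀ x ∈ I, d i x ∈ I

/-- The differential spectrum: prime differential ideals, with the Kolchin topology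
(the subspace topology induced from the Zariski topology on `PrimeSpectrum`). -/
abbrev DiffSpec {A : Type*} [CommRing A] {k : ℕ} (d : Fin k → A → A) :=
  {p : PrimeSpectrum A // IsDiffIdeal d p.asIdeal}

/-- A Keigher ring: the radical of every differential ideal is differential. -/
def IsKeigher {A : Type*} [CommRing A] {k : ℕ} (d : Fin k → A → A) : Prop :=
  ∀ I : Ideal A, IsDiffIdeal d I → IsDiffIdeal d I.radical

/-- `radDiffGen d E` is the smallest radical differential ideal containing `E`. -/
def radDiffGen {A : Type*} [CommRing A] {k : ℕ} (d : Fin k → A → A) (E : Set A) : Ideal A :=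
  sInf {I : Ideal A | E ⊆ I ∧ I.IsRadical ∧ IsDiffIdeal d I}

section Aux

variable {A : Type*} [CommRing A] {k : ℕ} (δ : Fin k → Derivation ℤ A A)

/-- Key lemma of Keigher/Kaplansky: in a radical differential ideal `T`,
`a * c ∈ T` implies `a * δ c ∈ T`. -/
lemma aux_mul_deriv {T : Ideal A} (hrad : T.IsRadical)
    (hdiff : IsDiffIdeal (fun i => ⇑(δ i)) T)
    {a c : A} (hac : a * c ∈ T) (i : Fin k) : a * δ i c ∈ T := by
  have h1 : (δ i) (a * c) ∈ T := hdiff i _ hac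
  refine hrad ⟨2, ?_⟩
  have h2 : (a * δ i c) ^ 2
      = (a * δ i c) * ((δ i) (a * c)) - (a * c) * (δ i a * δ i c) := by
    rw [Derivation.leibniz]
    simp only [smul_eq_mul]
    ring
  rw [h2]
  exact T.sub_mem (T.mul_mem_left _ h1) (T.mul_mem_right _ hac)

/-- The "colon-like" ideal `{z | z * y ∈ T}`. -/
def colonLike (T : Ideal A) (y : A) : Ideal A where
  carrier := {z | z * y ∈ T}
  add_mem' := by
    intro p q hp hq
    simpa [add_mul] using T.add_mem hp hq
  zero_mem' := by simp
  smul_mem' := by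
    intro c z hz
    simpa [smul_eq_mul, mul_assoc] using T.mul_mem_left c hz

lemma mem_colonLike {T : Ideal A} {y z : A} : z ∈ colonLike T y ↔ z * y ∈ T := Iff.rfl

lemma colonLike_isRadical {T : Ideal A} (hrad : T.IsRadical) (y : A) :
    (colonLike T y).IsRadical := by
  intro z hz
  obtain ⟨m, hm⟩ := hz
  have h1 : z ^ (m + 1) ∈ colonLike T y := by
    rw [pow_succ]
    exact (colonLike T y).mul_mem_right z hm
  rw [mem_colonLike] at h1 ⊢
  refine hrad ⟨m + 1, ?_⟩
  have : (z * y) ^ (m + 1) = (z ^ (m + 1) * y) * y ^ m := by ring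
  rw [this]
  exact T.mul_mem_right _ h1

lemma colonLike_isDiff {T : Ideal A} (hrad : T.IsRadical)
    (hdiff : IsDiffIdeal (fun i => ⇑(δ i)) T) (y : A) :
    IsDiffIdeal (fun i => ⇑(δ i)) (colonLike T y) := by
  intro i z hz
  rw [mem_colonLike] at hz ⊢
  have := aux_mul_deriv δ hrad hdiff (a := y) (c := z) (by rwa [mul_comm]) i
  rwa [mul_comm]

/-- Basic properties of `radDiffGen`. -/
lemma subset_radDiffGen (E : Set A) :
    E ⊆ (radDiffGen (fun i => ⇑(δ i)) E : Set A) := fun x hx =>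
  Submodule.mem_sInf.2 fun _ hI => hI.1 hx

lemma radDiffGen_isRadical (E : Set A) :
    (radDiffGen (fun i => ⇑(δ i)) E).IsRadical := by
  rintro z ⟨m, hm⟩
  exact Submodule.mem_sInf.2 fun I hI => hI.2.1 ⟨m, Submodule.mem_sInf.1 hm I hI⟩

lemma radDiffGen_isDiff (E : Set A) :
    IsDiffIdeal (fun i => ⇑(δ i)) (radDiffGen (fun i => ⇑(δ i)) E) := fun i x hx =>
  Submodule.mem_sInf.2 fun I hI => hI.2.2 i x (Submodule.mem_sInf.1 hx I hI)

lemma radDiffGen_le {E : Set A} {I : Ideal A} (hE : E ⊆ I) (hrad : I.IsRadical)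
    (hdiff : IsDiffIdeal (fun i => ⇑(δ i)) I) :
    radDiffGen (fun i => ⇑(δ i)) E ≤ I :=
  sInf_le ⟨hE, hrad, hdiff⟩

/-- Every radical differential ideal avoiding `a` is contained in a prime differential
ideal avoiding `a`. -/
lemma exists_prime_diff {I : Ideal A} (hrad : I.IsRadical)
    (hdiff : IsDiffIdeal (fun i => ⇑(δ i)) I) {a : A} (ha : a ∉ I) :
    ∃ P : Ideal A, P.IsPrime ∧ IsDiffIdeal (fun i => ⇑(δ i)) P ∧ I ≤ P ∧ a ∉ P := by
  set s : Set (Ideal A) :=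
    {J | J.IsRadical ∧ IsDiffIdeal (fun i => ⇑(δ i)) J ∧ a ∉ J} with hs
  have hchainCond : ∀ c ⊆ s, IsChain (· ≤ ·) c → ∀ y ∈ c, ∃ ub ∈ s, ∀ z ∈ c, z ≤ ub := by
    intro c hcs hchain y hyc
    refine ⟨sSup c, ?_, fun z hz => le_sSup hz⟩
    have hdir : DirectedOn (· ≤ ·) c := hchain.directedOn
    have hne : c.Nonempty := ⟨y, hyc⟩
    have hmem : ∀ z : A, z ∈ sSup c ↔ ∃ J ∈ c, z ∈ J := fun z =>
      Submodule.mem_sSup_of_directed hne hdir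
    refine ⟨?_, ?_, ?_⟩
    · rintro z ⟨m, hm⟩
      obtain ⟨J, hJc, hzJ⟩ := (hmem _).1 hm
      exact (hmem z).2 ⟨J, hJc, (hcs hJc).1 ⟨m, hzJ⟩⟩
    · intro i z hz
      obtain ⟨J, hJc, hzJ⟩ := (hmem z).1 hz
      exact (hmem _).2 ⟨J, hJc, (hcs hJc).2.1 i z hzJ⟩
    · intro haSup
      obtain ⟨J, hJc, hzJ⟩ := (hmem a).1 haSup
      exact (hcs hJc).2.2 hzJ
  obtain ⟨M, hIM, hMs, hMmax⟩ := zorn_le_nonempty₀ s hchainCond I ⟨hrad, hdiff, ha⟩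
  -- M is maximal among radical differential ideals avoiding a.
  obtain ⟨hMrad, hMdiff, haM⟩ := hMs
  -- key: for x ∉ M, a ∈ radDiffGen (insert x M)
  have key : ∀ x : A, x ∉ M → a ∈ radDiffGen (fun i => ⇑(δ i)) (insert x (M : Set A)) := by
    intro x hx
    by_contra haMx
    set Mx := radDiffGen (fun i => ⇑(δ i)) (insert x (M : Set A)) with hMx
    have hMle : M ≤ Mx := fun z hz =>
      subset_radDiffGen δ _ (Set.mem_insert_of_mem _ hz)
    have hMxs : Mx ∈ s := ⟨radDiffGen_isRadical δ _, radDiffGen_isDiff δ _, haMx⟩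
    have := hMmax hMxs hMle
    exact hx (this (subset_radDiffGen δ _ (Set.mem_insert _ _)))
  refine ⟨M, ?_, hMdiff, hIM, haM⟩
  constructor
  · intro hTop
    exact haM (hTop ▸ Submodule.mem_top)
  · intro x y hxy
    by_contra hcon
    push_neg at hcon
    obtain ⟨hx, hy⟩ := hcon
    -- colonLike M y contains insert x M
    have h1 : a * y ∈ M := by
      have hle : radDiffGen (fun i => ⇑(δ i)) (insert x (M : Set A)) ≤ colonLike M y := by
        refine radDiffGen_le δ ?_ (colonLike_isRadical hMrad y)
          (colonLike_isDiff δ hMrad hMdiff y)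
        rintro z (rfl | hz)
        · exact hxy
        · exact M.mul_mem_right y hz
      exact hle (key x hx)
    have h2 : a * a ∈ M := by
      have hle : radDiffGen (fun i => ⇑(δ i)) (insert y (M : Set A)) ≤ colonLike M a := by
        refine radDiffGen_le δ ?_ (colonLike_isRadical hMrad a)
          (colonLike_isDiff δ hMrad hMdiff a)
        rintro z (rfl | hz)
        · show z * a ∈ M
          rwa [mul_comm]
        · exact M.mul_mem_right a hz
      have := hle (key y hy)
      rwa [mem_colonLike, mul_comm] at this
    have h3 : a ^ 2 ∈ M := by rw [pow_two]; exact h2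
    exact haM (hMrad ⟨2, h3⟩)

end Aux

/-- If the smallest radical differential ideal containing `b 1, …, b n` is all of `A`, the
open sets `X_{b i}` cover `X = Spec^Δ A`; conversely, for a Keigher ring, if the `X_{b i}`
cover `X` then the smallest radical differential ideal containing the `b i` is `A`. -/
theorem stmt19 {A : Type*} [CommRing A] {k : ℕ} (δ : Fin k → Derivation ℤ A A)
    (hcomm : ∀ i j a, δ i (δ j a) = δ j (δ i a)) (n : ℕ) (b : Fin n → A) :
    (radDiffGen (fun i => ⇑(δ i)) (Set.range b) = ⊤ →
      ∀ p : DiffSpec (fun i => ⇑(δ i)), ∃ j, b j ∉ p.1.asIdeal) ∧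
    (IsKeigher (fun i => ⇑(δ i)) →
      (∀ p : DiffSpec (fun i => ⇑(δ i)), ∃ j, b j ∉ p.1.asIdeal) →
      radDiffGen (fun i => ⇑(δ i)) (Set.range b) = ⊤) := by
  constructor
  · intro htop p
    by_contra h
    push_neg at h
    have hsub : Set.range b ⊆ (p.1.asIdeal : Set A) := by
      rintro _ ⟨j, rfl⟩; exact h j
    have hle : radDiffGen (fun i => ⇑(δ i)) (Set.range b) ≤ p.1.asIdeal :=
      radDiffGen_le δ hsub p.1.isPrime.isRadical p.2
    rw [htop] at hle
    exact p.1.isPrime.ne_top (top_le_iff.1 hle)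
  · intro _ hcov
    by_contra hne
    have h1 : (1 : A) ∉ radDiffGen (fun i => ⇑(δ i)) (Set.range b) := by
      intro h
      exact hne (Ideal.eq_top_iff_one _ |>.2 h)
    obtain ⟨P, hP, hPdiff, hle, haP⟩ :=
      exists_prime_diff δ (radDiffGen_isRadical δ _) (radDiffGen_isDiff δ _) h1
    obtain ⟨j, hj⟩ := hcov ⟨⟨P, hP⟩, hPdiff⟩
    exact hj (hle (subset_radDiffGen δ _ ⟨j, rfl⟩))
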